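/- Under the biased voter rule on a d-regular graph with conductance at least φ, for 0 < q_1 < q_0 ≤ 1 there exists a constant γ = γ(q_0,q_1,φ) ∈ (0,1) such that at any time t, P(Δ(t) ≤ ((q_0−q_1)/2)·φ·min(A_t, B_t)) ≤ 2·exp(−γ·min(A_t,B_t)). -/

import Mathlib

open MeasureTheory ProbabilityTheory Finset
open scoped ENNReal

lemma exp_le_quad {x : ℝ} (hx : |x| ≤ 1) : Real.exp x ≤ 1 + x + x ^ 2 := by
  have h := Real.exp_bound hx (n := 2) (by norm_num)
  have h2 : Real.exp x - (1 + x) ≤ x ^ 2 * ((3:ℝ) / 4) := by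
    have := (abs_le.1 h).2
    norm_num [Finset.sum_range_succ, Nat.factorial] at this; linarith
  nlinarith [sq_nonneg x]

lemma bern_exp_eq {Ω : Type} (W : Ω → ℝ)
    (h01 : ∀ ω, W ω = 0 ∨ W ω = 1) (s : ℝ) (ω : Ω) :
    Real.exp (s * W ω) = 1 + (Real.exp s - 1) * W ω := by
  rcases h01 ω with h | h <;> simp [h]

lemma bern_integral {Ω : Type} [MeasurableSpace Ω] (μ : Measure Ω) [IsProbabilityMeasure μ]
    (W : Ω → ℝ) (hW : Measurable W) (h01 : ∀ ω, W ω = 0 ∨ W ω = 1) :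
    Integrable W μ ∧ ∫ ω, W ω ∂μ = (μ {ω | W ω = 1}).toReal := by
  have hint : Integrable W μ := by
    refine (integrable_const (1:ℝ)).mono' hW.aestronglyMeasurable (ae_of_all _ fun ω => ?_)
    rcases h01 ω with h | h <;> simp [h]
  refine ⟨hint, ?_⟩
  have hind : W = Set.indicator {ω | W ω = 1} (fun _ => (1:ℝ)) := by
    funext ω
    rcases h01 ω with h | h <;> simp [Set.indicator_apply, Set.mem_setOf_eq, h]
  have hs : MeasurableSet {ω | W ω = 1} := hW (measurableSet_singleton 1)
  rw [hind, integral_indicator_const (1:ℝ) hs]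
  simp
  rfl

lemma bern_mgf {Ω : Type} [MeasurableSpace Ω] (μ : Measure Ω) [IsProbabilityMeasure μ]
    (W : Ω → ℝ) (hW : Measurable W) (h01 : ∀ ω, W ω = 0 ∨ W ω = 1) (s : ℝ) :
    Integrable (fun ω => Real.exp (s * W ω)) μ ∧
    ∫ ω, Real.exp (s * W ω) ∂μ = 1 + (Real.exp s - 1) * (μ {ω | W ω = 1}).toReal := by
  obtain ⟨hint, hval⟩ := bern_integral μ W hW h01
  have heq : (fun ω => Real.exp (s * W ω)) = fun ω => 1 + (Real.exp s - 1) * W ω :=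
    funext (bern_exp_eq W h01 s)
  constructor
  · rw [heq]; exact (integrable_const 1).add (hint.const_mul _)
  · rw [heq, integral_add (integrable_const 1) (hint.const_mul _), integral_const_mul, hval]
    simp

lemma key_arith (q0 q1 φ m r : ℝ) (hq1 : 0 < q1) (hq : q1 < q0) (hq0 : q0 ≤ 1)
    (hφ : 0 < φ) (hm : 0 < m) (hr0 : 0 ≤ r) (hrφ : φ * m ≤ r) (hrm : r ≤ m) :
    ((q0 - q1) * φ / 2) / 8 * ((q0 - q1) / 2 * φ * m)
      + ((((q0 - q1) * φ / 2) / 8 + (((q0 - q1) * φ / 2) / 8) ^ 2) * (q1 * r)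
        + (-(((q0 - q1) * φ / 2) / 8) + (((q0 - q1) * φ / 2) / 8) ^ 2) * (q0 * r))
      ≤ -(3 * ((q0 - q1) * φ / 2) ^ 2 / 32) * m := by
  have hδ : 0 < q0 - q1 := sub_pos.2 hq
  have h1 : (q0 - q1) * (φ * m) ≤ (q0 - q1) * r :=
    mul_le_mul_of_nonneg_left hrφ hδ.le
  have h2 : (q0 + q1) * r ≤ 2 * m := by nlinarith
  have hL0 : (0:ℝ) ≤ (q0 - q1) * φ / 16 := by positivity
  have hL2 : (0:ℝ) ≤ ((q0 - q1) * φ / 16) ^ 2 := sq_nonneg _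
  have h1' := mul_le_mul_of_nonneg_left h1 hL0
  have h2' := mul_le_mul_of_nonneg_left h2 hL2
  nlinarith [h1', h2']

theorem stmt_6 (q0 q1 φ : ℝ) (hq1 : 0 < q1) (hq : q1 < q0) (hq0 : q0 ≤ 1) (hφ : 0 < φ) :
    ∃ γ ∈ Set.Ioo (0:ℝ) 1,
      ∀ (Ω : Type) (_ : MeasurableSpace Ω) (μ : Measure Ω), IsProbabilityMeasure μ →
      ∀ (V : Type) (_ : Fintype V) (_ : DecidableEq V) (A B : Finset V),
      Disjoint A B → A ∪ B = Finset.univ →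
      ∀ (d : ℕ), 0 < d →
      ∀ (dA dB : V → ℕ), (∀ v, dA v ≤ d) → (∀ v, dB v ≤ d) →
      ∀ (EAB : ℕ), (∑ v ∈ B, dA v = EAB) → (∑ v ∈ A, dB v = EAB) →
      φ * d * min (A.card : ℝ) (B.card : ℝ) ≤ (EAB : ℝ) →
      ∀ (Z : V → Ω → ℝ), (∀ v, Measurable (Z v)) →
      iIndepFun Z μ →
      (∀ v ∈ B, (∀ ω, Z v ω = 0 ∨ Z v ω = 1) ∧
        (μ {ω | Z v ω = 1}).toReal = q0 * (dA v : ℝ) / d) →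
      (∀ v ∈ A, (∀ ω, Z v ω = 0 ∨ Z v ω = 1) ∧
        (μ {ω | Z v ω = 1}).toReal = q1 * (dB v : ℝ) / d) →
      (μ {ω | (∑ v ∈ B, Z v ω) - (∑ v ∈ A, Z v ω)
          ≤ (q0 - q1) / 2 * φ * min (A.card : ℝ) (B.card : ℝ)}).toReal
        ≤ 2 * Real.exp (-γ * min (A.card : ℝ) (B.card : ℝ)) := by
  have hδ : 0 < q0 - q1 := sub_pos.2 hq
  have hδ1 : q0 - q1 ≤ 1 := by linarith
  have hφ1 : 0 < min φ 1 := lt_min hφ one_pos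
  set c0 : ℝ := (q0 - q1) * min φ 1 / 2 with hc0def
  have hc0 : 0 < c0 := by
    apply div_pos (mul_pos hδ hφ1) two_pos
  have hc0half : c0 ≤ 1 / 2 := by
    have h1 : (q0 - q1) * min φ 1 ≤ 1 :=
      mul_le_one₀ hδ1 hφ1.le (min_le_right _ _)
    rw [hc0def]; linarith
  refine ⟨3 * c0 ^ 2 / 32, ⟨by positivity, by nlinarith⟩, ?_⟩
  intro Ω mΩ μ hμ V _ _ A B hdisj huniv d hd dA dB hdA hdB EAB hEB hEA hcond Z hZmeas hZindep hZB hZA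
  haveI := hμ
  set m : ℝ := min (A.card : ℝ) (B.card : ℝ) with hmdef
  have hm0 : 0 ≤ m := le_min (by positivity) (by positivity)
  have hprob_le : ∀ (s : Set Ω), (μ s).toReal ≤ 1 := by
    intro s
    have h1 : μ s ≤ 1 := prob_le_one
    calc (μ s).toReal ≤ (1 : ℝ≥0∞).toReal := ENNReal.toReal_mono (by simp) h1
      _ = 1 := by simp
  rcases eq_or_lt_of_le hm0 with hm | hm
  · -- degenerate case: min = 0
    rw [← hm]
    calc (μ _).toReal ≤ 1 := hprob_le _
      _ ≤ 2 * Real.exp (-(3 * c0 ^ 2 / 32) * 0) := by norm_num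
  -- main case
  have hd' : (0:ℝ) < d := by exact_mod_cast hd
  -- membership
  have hmem : ∀ v : V, v ∈ A ∨ v ∈ B := fun v => by
    have : v ∈ A ∪ B := huniv ▸ mem_univ v
    exact Finset.mem_union.1 this
  have h01 : ∀ v, ∀ ω, Z v ω = 0 ∨ Z v ω = 1 := fun v => by
    rcases hmem v with h | h
    · exact (hZA v h).1
    · exact (hZB v h).1
  -- r bounds
  set r : ℝ := (EAB : ℝ) / d with hrdef
  have hEABB : (EAB : ℝ) ≤ (B.card : ℝ) * d := by
    rw [← hEB]
    push_cast
    calc (∑ v ∈ B, (dA v : ℝ)) ≤ ∑ v ∈ B, (d : ℝ) :=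
          Finset.sum_le_sum fun v _ => by exact_mod_cast hdA v
      _ = (B.card : ℝ) * d := by simp [mul_comm]
  have hEABA : (EAB : ℝ) ≤ (A.card : ℝ) * d := by
    rw [← hEA]
    push_cast
    calc (∑ v ∈ A, (dB v : ℝ)) ≤ ∑ v ∈ A, (d : ℝ) :=
          Finset.sum_le_sum fun v _ => by exact_mod_cast hdB v
      _ = (A.card : ℝ) * d := by simp [mul_comm]
  have hrm : r ≤ m := by
    rw [hrdef, div_le_iff₀ hd']
    rcases min_cases (A.card : ℝ) (B.card : ℝ) with ⟨h, _⟩ | ⟨h, _⟩ <;> rw [hmdef, h]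
    · exact hEABA
    · exact hEABB
  have hrφ : φ * m ≤ r := by
    rw [hrdef, le_div_iff₀ hd']
    calc φ * m * d = φ * d * m := by ring
      _ ≤ (EAB : ℝ) := hcond
  have hφle1 : φ ≤ 1 := by
    have h1 : φ * d * m ≤ m * d := le_trans hcond (by
      have := mul_le_mul_of_nonneg_right hrm hd'.le
      rw [hrdef, div_mul_cancel₀] at this
      · exact this
      · exact hd'.ne')
    nlinarith
  have hminφ : min φ 1 = φ := min_eq_left hφle1
  -- parameters
  set L : ℝ := c0 / 8 with hLdef
  have hL0 : 0 < L := by positivity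
  have hL1 : L ≤ 1 := by rw [hLdef]; linarith
  -- the transformed variables
  set X : V → Ω → ℝ := fun v => (fun x : ℝ => if v ∈ B then x else -x) ∘ Z v with hXdef
  have hXmeas : ∀ v, Measurable (X v) := by
    intro v
    refine Measurable.comp ?_ (hZmeas v)
    by_cases h : v ∈ B
    · simp only [h, if_true]; exact measurable_id'
    · simp only [h, if_false]; exact measurable_neg
  have hXindep : iIndepFun X μ := by
    refine hZindep.comp (fun v x => if v ∈ B then x else -x) fun v => ?_
    by_cases h : v ∈ B
    · simp only [h, if_true]; exact measurable_id'
    · simp only [h, if_false]; exact measurable_neg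
  -- pointwise rewriting of exp(-L * X v)
  set s : V → ℝ := fun v => if v ∈ B then -L else L with hsdef
  have hXexp : ∀ v, (fun ω => Real.exp (-L * X v ω)) = fun ω => Real.exp (s v * Z v ω) := by
    intro v
    funext ω
    by_cases h : v ∈ B <;> simp [hXdef, hsdef, h] <;> ring_nf
  -- integrability of the exponentials
  have hint : ∀ v ∈ Finset.univ (α := V), Integrable (fun ω => Real.exp (-L * X v ω)) μ := by
    intro v _
    rw [hXexp v]
    exact (bern_mgf μ (Z v) (hZmeas v) (h01 v) (s v)).1
  -- mgf of each variable
  set p : V → ℝ := fun v => (μ {ω | Z v ω = 1}).toReal with hpdef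
  have hmgf : ∀ v, mgf (X v) μ (-L) = 1 + (Real.exp (s v) - 1) * p v := by
    intro v
    have := (bern_mgf μ (Z v) (hZmeas v) (h01 v) (s v)).2
    rw [mgf]
    calc ∫ ω, Real.exp (-L * X v ω) ∂μ = ∫ ω, Real.exp (s v * Z v ω) ∂μ := by rw [hXexp v]
      _ = 1 + (Real.exp (s v) - 1) * p v := this
  -- sum identity
  have hsum : ∀ ω, (∑ v ∈ Finset.univ, X v) ω = (∑ v ∈ B, Z v ω) - (∑ v ∈ A, Z v ω) := by
    intro ω
    rw [Finset.sum_apply, ← huniv, Finset.sum_union hdisj]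
    have hA : ∑ v ∈ A, X v ω = -∑ v ∈ A, Z v ω := by
      rw [← Finset.sum_neg_distrib]
      refine Finset.sum_congr rfl fun v hv => ?_
      have : v ∉ B := Finset.disjoint_left.1 hdisj hv
      simp [hXdef, this]
    have hB : ∑ v ∈ B, X v ω = ∑ v ∈ B, Z v ω := by
      refine Finset.sum_congr rfl fun v hv => ?_
      simp [hXdef, hv]
    rw [hA, hB]; ring
  -- set equality
  set a : ℝ := (q0 - q1) / 2 * φ * m with hadef
  have hset : {ω | (∑ v ∈ B, Z v ω) - (∑ v ∈ A, Z v ω) ≤ a}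
      = {ω | (∑ v ∈ Finset.univ, X v) ω ≤ a} := by
    ext ω
    simp only [Set.mem_setOf_eq]
    rw [hsum ω]
  -- Chernoff
  have hchern := measure_le_le_exp_mul_mgf (μ := μ) (X := ∑ v ∈ Finset.univ, X v) a
    (neg_nonpos.2 hL0.le)
    (hXindep.integrable_exp_mul_sum hXmeas hint)
  rw [hXindep.mgf_sum hXmeas] at hchern
  -- bound the product of mgfs
  have hprod : (∏ v ∈ Finset.univ, mgf (X v) μ (-L))
      ≤ Real.exp (∑ v ∈ Finset.univ, (Real.exp (s v) - 1) * p v) := by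
    rw [Real.exp_sum]
    refine Finset.prod_le_prod (fun v _ => mgf_nonneg) fun v _ => ?_
    rw [hmgf v]
    linarith [Real.add_one_le_exp ((Real.exp (s v) - 1) * p v)]
  -- compute the sum
  have hsum2 : (∑ v ∈ Finset.univ, (Real.exp (s v) - 1) * p v)
      = (Real.exp L - 1) * (q1 * r) + (Real.exp (-L) - 1) * (q0 * r) := by
    rw [← huniv, Finset.sum_union hdisj]
    have hA : ∑ v ∈ A, (Real.exp (s v) - 1) * p v = (Real.exp L - 1) * (q1 * r) := by
      have : ∀ v ∈ A, (Real.exp (s v) - 1) * p v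
          = (Real.exp L - 1) * q1 / d * (dB v : ℝ) := by
        intro v hv
        have hnB : v ∉ B := Finset.disjoint_left.1 hdisj hv
        have := (hZA v hv).2
        simp only [hpdef, hsdef, hnB, if_false]
        rw [this]; ring
      rw [Finset.sum_congr rfl this, ← Finset.mul_sum]
      have : (∑ v ∈ A, (dB v : ℝ)) = (EAB : ℝ) := by
        exact_mod_cast hEA
      rw [this, hrdef]; ring
    have hB : ∑ v ∈ B, (Real.exp (s v) - 1) * p v = (Real.exp (-L) - 1) * (q0 * r) := by
      have : ∀ v ∈ B, (Real.exp (s v) - 1) * p v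
          = (Real.exp (-L) - 1) * q0 / d * (dA v : ℝ) := by
        intro v hv
        have := (hZB v hv).2
        simp only [hpdef, hsdef, hv, if_true]
        rw [this]; ring
      rw [Finset.sum_congr rfl this, ← Finset.mul_sum]
      have : (∑ v ∈ B, (dA v : ℝ)) = (EAB : ℝ) := by
        exact_mod_cast hEB
      rw [this, hrdef]; ring
    rw [hA, hB]
  -- numeric bound on the exponent
  have hc0φ : c0 = (q0 - q1) * φ / 2 := by rw [hc0def, hminφ]
  have hE1 : Real.exp (-L) ≤ 1 - L + L ^ 2 := by
    have := exp_le_quad (x := -L) (by rw [abs_neg, abs_of_pos hL0]; exact hL1)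
    calc Real.exp (-L) ≤ 1 + (-L) + (-L) ^ 2 := this
      _ = 1 - L + L ^ 2 := by ring
  have hE2 : Real.exp L ≤ 1 + L + L ^ 2 :=
    exp_le_quad (by rw [abs_of_pos hL0]; exact hL1)
  have hr0 : 0 ≤ r := by rw [hrdef]; positivity
  have key := key_arith q0 q1 φ m r hq1 hq hq0 hφ hm hr0 hrφ hrm
  have hexponent : -(-L) * a + ((Real.exp L - 1) * (q1 * r) + (Real.exp (-L) - 1) * (q0 * r))
      ≤ -(3 * c0 ^ 2 / 32) * m := by
    have h1 : (Real.exp (-L) - 1) * (q0 * r) ≤ (-L + L ^ 2) * (q0 * r) := by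
      apply mul_le_mul_of_nonneg_right (by linarith) (mul_nonneg (by linarith) hr0)
    have h2 : (Real.exp L - 1) * (q1 * r) ≤ (L + L ^ 2) * (q1 * r) := by
      apply mul_le_mul_of_nonneg_right (by linarith) (mul_nonneg hq1.le hr0)
    have h3 : L * a + ((L + L ^ 2) * (q1 * r) + (-L + L ^ 2) * (q0 * r))
        ≤ -(3 * c0 ^ 2 / 32) * m := by
      rw [hadef, hLdef, hc0φ]
      exact key
    linarith
  -- put it together
  calc (μ {ω | (∑ v ∈ B, Z v ω) - (∑ v ∈ A, Z v ω) ≤ a}).toReal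
      = (μ {ω | (∑ v ∈ Finset.univ, X v) ω ≤ a}).toReal := by rw [hset]
    _ ≤ Real.exp (-(-L) * a) * ∏ v ∈ Finset.univ, mgf (X v) μ (-L) := hchern
    _ ≤ Real.exp (-(-L) * a) * Real.exp (∑ v ∈ Finset.univ, (Real.exp (s v) - 1) * p v) := by
        apply mul_le_mul_of_nonneg_left hprod (Real.exp_pos _).le
    _ = Real.exp (-(-L) * a + ((Real.exp L - 1) * (q1 * r) + (Real.exp (-L) - 1) * (q0 * r))) := by
        rw [← Real.exp_add, hsum2]
    _ ≤ Real.exp (-(3 * c0 ^ 2 / 32) * m) := Real.exp_le_exp.2 hexponent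
    _ ≤ 2 * Real.exp (-(3 * c0 ^ 2 / 32) * m) := by
        linarith [Real.exp_pos (-(3 * c0 ^ 2 / 32) * m)]
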